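/- In the regret game, if v < 1/p, then for every player i, every action profile a, and every state of the other players' actions, the expected payoff from choosing safe strictly exceeds the expected payoff from choosing risky (i.e., safe is a strictly dominant action); consequently, the profile in which every player chooses safe is a pure strategy Nash equilibrium and it is the unique pure strategy Nash equilibrium. -/
import Mathlib


namespace RegretGame

/-- An action in the regret game: choose the risky lottery or the safe lottery. -/
inductive Act : Type
  | risky : Act
  | safe : Act
deriving DecidableEq, Repr

/-- `numRisky a i` is the number of players other than `i` choosing the risky lottery
at the action profile `a`. -/
def numRisky {N : ℕ} (a : Fin N → Act) (i : Fin N) : ℕ :=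
  (Finset.univ.filter (fun j => j ≠ i ∧ a j = Act.risky)).card

/-- Player `i`'s expected payoff in the regret game at action profile `a`, given the
success probability `p`, coefficient of regret aversion `κ`, normalized good-state
payoff `v` of the risky lottery, and the information function `q` (the probability of
learning the risky outcome, as a function of how many of the others chose risky). -/
noncomputable def payoff {N : ℕ} (p κ v : ℝ) (q : ℕ → ℝ)
    (a : Fin N → Act) (i : Fin N) : ℝ :=
  if a i = Act.risky then p * v - (1 - p) * κ
  else 1 - p * q (numRisky a i) * κ * (v - 1)

/-- A pure strategy Nash equilibrium of the regret game: no player can strictly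
increase her expected payoff by unilaterally changing her own action. -/
def IsNash {N : ℕ} (p κ v : ℝ) (q : ℕ → ℝ) (a : Fin N → Act) : Prop :=
  ∀ (i : Fin N) (b : Act),
    payoff p κ v q (Function.update a i b) i ≤ payoff p κ v q a i

/-- **Theorem 3, part 1.** If `v < 1/p`, then safe is a strictly dominant action for
every player, the all-safe profile is a pure strategy Nash equilibrium, and it is the
unique pure strategy Nash equilibrium of the regret game. -/
theorem regret_game_safe_dominant
    (N : ℕ) (hN : 2 ≤ N) (p κ v : ℝ)
    (hp : 0 < p ∧ p < 1) (hκ : 0 < κ) (hv : 1 < v)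
    (q : ℕ → ℝ)
    (hq01 : ∀ m ≤ N - 1, 0 ≤ q m ∧ q m ≤ 1)
    (hq0 : q 0 = 0) (hqN : q (N - 1) = 1)
    (hqmono : ∀ m₁ m₂, m₁ < m₂ → m₂ ≤ N - 1 → q m₁ < q m₂)
    (hdom : v < 1 / p) :
    (∀ (a : Fin N → Act) (i : Fin N),
        payoff p κ v q (Function.update a i Act.risky) i <
          payoff p κ v q (Function.update a i Act.safe) i) ∧
    IsNash p κ v q (fun _ : Fin N => Act.safe) ∧
    (∀ a : Fin N → Act, IsNash p κ v q a → a = fun _ : Fin N => Act.safe) := by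
  obtain ⟨hp0, hp1⟩ := hp
  have hpv : p * v < 1 := by
    have := (lt_div_iff₀ hp0).mp hdom
    linarith
  have hm : ∀ (a : Fin N → Act) (i : Fin N), numRisky a i ≤ N - 1 := by
    intro a i
    have hsub : (Finset.univ.filter (fun j => j ≠ i ∧ a j = Act.risky)) ⊆
        Finset.univ.erase i := by
      intro j hj
      simp only [Finset.mem_filter] at hj
      exact Finset.mem_erase.mpr ⟨hj.2.1, Finset.mem_univ j⟩
    calc numRisky a i ≤ (Finset.univ.erase i).card := Finset.card_le_card hsub
      _ = N - 1 := by
        rw [Finset.card_erase_of_mem (Finset.mem_univ i)]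
        simp
  have hdomn : ∀ (a : Fin N → Act) (i : Fin N),
      payoff p κ v q (Function.update a i Act.risky) i <
        payoff p κ v q (Function.update a i Act.safe) i := by
    intro a i
    have h1 : payoff p κ v q (Function.update a i Act.risky) i
        = p * v - (1 - p) * κ := by
      simp [payoff, Function.update_self]
    have h2 : payoff p κ v q (Function.update a i Act.safe) i
        = 1 - p * q (numRisky (Function.update a i Act.safe) i) * κ * (v - 1) := by
      simp [payoff, Function.update_self]
    rw [h1, h2]
    set m := numRisky (Function.update a i Act.safe) i with hmdef
    obtain ⟨hq0', hq1'⟩ := hq01 m (hm _ i)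
    have hb : p * q m * κ * (v - 1) ≤ p * κ * (v - 1) := by
      have h3 : p * q m ≤ p * 1 := mul_le_mul_of_nonneg_left hq1' hp0.le
      have h4 := mul_le_mul_of_nonneg_right
        (mul_le_mul_of_nonneg_right h3 hκ.le) (by linarith : (0:ℝ) ≤ v - 1)
      linarith
    nlinarith
  refine ⟨hdomn, ?_, ?_⟩
  · intro i b
    have heq : Function.update (fun _ : Fin N => Act.safe) i Act.safe
        = (fun _ : Fin N => Act.safe) := by
      funext j
      by_cases h : j = i <;> simp [Function.update, h]
    cases b with
    | safe => rw [heq]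
    | risky =>
      have := hdomn (fun _ : Fin N => Act.safe) i
      rw [heq] at this
      exact this.le
  · intro a hna
    funext i
    by_contra hri
    have hai : a i = Act.risky := by cases h : a i <;> simp_all
    have heq : Function.update a i Act.risky = a := by
      funext j
      by_cases h : j = i
      · subst h; simp [hai]
      · simp [Function.update, h]
    have := hna i Act.safe
    have hlt := hdomn a i
    rw [heq] at hlt
    exact absurd this (not_le.mpr hlt)

end RegretGame
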